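/- arXiv:2506.20669 — 13 statements merged into one kernel-verified Lean document; each statement's English description precedes it below -/
import Mathlib

section
/- A finite simple graph G admits an opposition (an automorphism f of order two such that f(v) ∉ N[v] for all vertices v) if and only if the complement graph of G has an opposition matching. -/
/-- An *opposition* of a simple graph `G`: an automorphism `f` of order two such that
`f v ∉ N[v]` for every vertex `v` (i.e. `f v ≠ v` and `f v` is not adjacent to `v`). -/
def IsOpposition {V : Type*} (G : SimpleGraph V) (f : V → V) : Prop :=
  (∀ u v, G.Adj u v ↔ G.Adj (f u) (f v)) ∧ (∀ v, f (f v) = v) ∧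
    ∀ v, f v ≠ v ∧ ¬ G.Adj v (f v)

/-- A graph is *opposable* if it admits an opposition. -/
def Opposable {V : Type*} (G : SimpleGraph V) : Prop := ∃ f, IsOpposition G f

/-- `f` is an opposition of the subgraph of `G` induced by the vertex set `S`. -/
def IsOppositionOn {V : Type*} (G : SimpleGraph V) (S : Set V) (f : V → V) : Prop :=
  (∀ v ∈ S, f v ∈ S) ∧ (∀ u ∈ S, ∀ v ∈ S, (G.Adj u v ↔ G.Adj (f u) (f v))) ∧
    (∀ v ∈ S, f (f v) = v) ∧ ∀ v ∈ S, f v ≠ v ∧ ¬ G.Adj v (f v)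

/-- A graph is *almost opposable* if deleting some admissible set `S`
(`u ∈ S ⊆ N[u]` for some vertex `u`) yields an opposable graph. -/
def AlmostOpposable {V : Type*} (G : SimpleGraph V) : Prop :=
  ∃ (u : V) (S : Set V), u ∈ S ∧ (∀ v ∈ S, v = u ∨ G.Adj u v) ∧
    ∃ f, IsOppositionOn G Sᶜ f

/-- The 4-cycle `C₄`. -/
def cycle4 : SimpleGraph (Fin 4) :=
  SimpleGraph.fromRel fun i j => (i : ℕ) + 1 = (j : ℕ) ∨ ((i : ℕ) = 3 ∧ (j : ℕ) = 0)

/-- The graph `2K₂`: two disjoint edges on four vertices. -/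
def twoK2 : SimpleGraph (Fin 4) :=
  SimpleGraph.fromRel fun i j =>
    ((i : ℕ) = 0 ∧ (j : ℕ) = 1) ∨ ((i : ℕ) = 2 ∧ (j : ℕ) = 3)

/-- A perfect matching `M` of `H` is an *opposition matching* if any two distinct
edges of `M` induce a subgraph of `H` isomorphic to `K₄`, `C₄` or `2K₂`. -/
def IsOppositionMatching {V : Type*} (H : SimpleGraph V) (M : H.Subgraph) : Prop :=
  M.IsPerfectMatching ∧
    ∀ v₁ v₂ v₃ v₄, M.Adj v₁ v₂ → M.Adj v₃ v₄ → s(v₁, v₂) ≠ s(v₃, v₄) →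
      Nonempty (H.induce {v₁, v₂, v₃, v₄} ≃g SimpleGraph.completeGraph (Fin 4)) ∨
      Nonempty (H.induce {v₁, v₂, v₃, v₄} ≃g cycle4) ∨
      Nonempty (H.induce {v₁, v₂, v₃, v₄} ≃g twoK2)

section OppositionProof

open SimpleGraph

private instance cycle4.decAdj : DecidableRel cycle4.Adj :=
  fun a b => decidable_of_iff' _ (SimpleGraph.fromRel_adj _ a b)

private instance twoK2.decAdj : DecidableRel twoK2.Adj :=
  fun a b => decidable_of_iff' _ (SimpleGraph.fromRel_adj _ a b)

private instance completeFour.decAdj : DecidableRel (completeGraph (Fin 4)).Adj :=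
  fun a b => inferInstanceAs (Decidable (a ≠ b))

/-- The key combinatorial property shared by `K₄`, `C₄` and `2K₂`. -/
def GoodProp {α : Type*} (H : SimpleGraph α) : Prop :=
  ∀ a b c d, a ≠ c → a ≠ d → b ≠ c → b ≠ d → H.Adj a b → H.Adj c d →
    (H.Adj a c ↔ H.Adj b d)

lemma goodProp_complete : GoodProp (completeGraph (Fin 4)) := by unfold GoodProp; decide

lemma goodProp_cycle4 : GoodProp cycle4 := by unfold GoodProp; decide

lemma goodProp_twoK2 : GoodProp twoK2 := by unfold GoodProp; decide

lemma goodProp_of_iso {α β : Type*} {H₁ : SimpleGraph α} {H₂ : SimpleGraph β}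
    (φ : H₁ ≃g H₂) (h : GoodProp H₂) : GoodProp H₁ := by
  intro a b c d hac had hbc hbd hab hcd
  have hinj : Function.Injective φ := φ.toEquiv.injective
  have := h (φ a) (φ b) (φ c) (φ d) (fun h' => hac (hinj h')) (fun h' => had (hinj h'))
    (fun h' => hbc (hinj h')) (fun h' => hbd (hinj h'))
    (φ.map_rel_iff.mpr hab) (φ.map_rel_iff.mpr hcd)
  rw [φ.map_rel_iff, φ.map_rel_iff] at this
  exact this

lemma induce_adj' {V : Type*} (H : SimpleGraph V) (s : Set V) (x y : s) :
    (H.induce s).Adj x y ↔ H.Adj x y := by simp [SimpleGraph.comap_adj]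

lemma induce_iso_of_four {V : Type*} (H : SimpleGraph V) (H' : SimpleGraph (Fin 4))
    (a b c d : V)
    (hab : a ≠ b) (hac : a ≠ c) (had : a ≠ d) (hbc : b ≠ c) (hbd : b ≠ d) (hcd : c ≠ d)
    (h01 : H.Adj a b ↔ H'.Adj 0 1) (h02 : H.Adj a c ↔ H'.Adj 0 2)
    (h03 : H.Adj a d ↔ H'.Adj 0 3) (h12 : H.Adj b c ↔ H'.Adj 1 2)
    (h13 : H.Adj b d ↔ H'.Adj 1 3) (h23 : H.Adj c d ↔ H'.Adj 2 3) :
    Nonempty (H.induce {a, b, c, d} ≃g H') := by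
  classical
  have ha : a ∈ ({a,b,c,d} : Set V) := by simp
  have hb : b ∈ ({a,b,c,d} : Set V) := by simp
  have hc : c ∈ ({a,b,c,d} : Set V) := by simp
  have hd : d ∈ ({a,b,c,d} : Set V) := by simp
  refine ⟨⟨⟨fun x => if x.1 = a then 0 else if x.1 = b then 1 else if x.1 = c then 2 else 3,
    ![⟨a, ha⟩, ⟨b, hb⟩, ⟨c, hc⟩, ⟨d, hd⟩], ?_, ?_⟩, ?_⟩⟩
  · rintro ⟨x, hx⟩
    simp only [Set.mem_insert_iff, Set.mem_singleton_iff] at hx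
    rcases hx with rfl | rfl | rfl | rfl <;>
      simp [hab.symm, hac.symm, had.symm, hbc.symm, hbd.symm, hcd.symm]
  · intro i
    fin_cases i <;>
      simp [hab.symm, hac.symm, had.symm, hbc.symm, hbd.symm, hcd.symm]
  · rintro ⟨x, hx'⟩ ⟨y, hy'⟩
    have hx := hx'; have hy := hy'
    simp only [Set.mem_insert_iff, Set.mem_singleton_iff] at hx hy
    rcases hx with rfl | rfl | rfl | rfl <;> rcases hy with rfl | rfl | rfl | rfl <;>
      simp only [Equiv.coe_fn_mk, if_pos rfl, if_neg hab.symm, if_neg hac.symm, if_neg had.symm,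
        if_neg hbc.symm, if_neg hbd.symm, if_neg hcd.symm, if_neg hab, if_neg hac, if_neg had,
        if_neg hbc, if_neg hbd, if_neg hcd, if_true, SimpleGraph.comap_adj,
        Function.Embedding.coe_subtype] <;>
      first
        | simp
        | exact h01.symm
        | exact h02.symm
        | exact h03.symm
        | exact h12.symm
        | exact h13.symm
        | exact h23.symm
        | (rw [H'.adj_comm, H.adj_comm]; exact h01.symm)
        | (rw [H'.adj_comm, H.adj_comm]; exact h02.symm)
        | (rw [H'.adj_comm, H.adj_comm]; exact h03.symm)
        | (rw [H'.adj_comm, H.adj_comm]; exact h12.symm)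
        | (rw [H'.adj_comm, H.adj_comm]; exact h13.symm)
        | (rw [H'.adj_comm, H.adj_comm]; exact h23.symm)

end OppositionProof

theorem opposable_iff_complement_oppositionMatching {V : Type*} (G : SimpleGraph V) :
    (∃ f, IsOpposition G f) ↔ ∃ M : Gᶜ.Subgraph, IsOppositionMatching Gᶜ M := by
  open SimpleGraph in
  constructor
  · rintro ⟨f, hpres, hinv, hopp⟩
    have hfne : ∀ v, f v ≠ v := fun v => (hopp v).1
    have hinj : Function.Injective f := fun u v h => by rw [← hinv u, h, hinv]
    have hGc : ∀ u v, Gᶜ.Adj u v ↔ Gᶜ.Adj (f u) (f v) := by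
      intro u v
      simp only [compl_adj]
      constructor
      · rintro ⟨hne, hna⟩
        exact ⟨fun h => hne (hinj h), fun h => hna ((hpres u v).2 h)⟩
      · rintro ⟨hne, hna⟩
        exact ⟨fun h => hne (by rw [h]), fun h => hna ((hpres u v).1 h)⟩
    refine ⟨⟨Set.univ, fun u v => f u = v ∧ u ≠ v, ?_, ?_, ?_⟩, ?_, ?_⟩
    · intro v w hvw
      obtain ⟨rfl, hvw⟩ := hvw
      exact (compl_adj G v (f v)).mpr ⟨hvw, (hopp v).2⟩
    · intro v w _
      exact Set.mem_univ v
    · refine ⟨fun u v huv => ?_⟩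
      obtain ⟨rfl, hvw⟩ := huv
      exact ⟨hinv u, hfne u⟩
    · exact ⟨fun v _ => ⟨f v, ⟨rfl, (hfne v).symm⟩, fun w hw => hw.1.symm⟩, fun v => Set.mem_univ v⟩
    · rintro v₁ v₂ v₃ v₄ ⟨rfl, h12ne⟩ ⟨rfl, h34ne⟩ hne
      have h13 : v₁ ≠ v₃ := by rintro rfl; exact hne rfl
      have h14 : v₁ ≠ f v₃ := by
        intro h; exact hne (by rw [h, hinv, Sym2.eq_swap])
      have h23 : f v₁ ≠ v₃ := by
        intro h; exact hne (by rw [← h, hinv, Sym2.eq_swap])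
      have h24 : f v₁ ≠ f v₃ := fun h => h13 (hinj h)
      have e12 : Gᶜ.Adj v₁ (f v₁) := (compl_adj G v₁ (f v₁)).mpr ⟨(hfne v₁).symm, (hopp v₁).2⟩
      have e34 : Gᶜ.Adj v₃ (f v₃) := (compl_adj G v₃ (f v₃)).mpr ⟨(hfne v₃).symm, (hopp v₃).2⟩
      have c1 : Gᶜ.Adj v₁ v₃ ↔ Gᶜ.Adj (f v₁) (f v₃) := hGc v₁ v₃
      have c2 : Gᶜ.Adj v₁ (f v₃) ↔ Gᶜ.Adj (f v₁) v₃ := by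
        have := hGc v₁ (f v₃); rwa [hinv] at this
      by_cases hA : Gᶜ.Adj v₁ v₃ <;> by_cases hB : Gᶜ.Adj v₁ (f v₃)
      · left
        exact induce_iso_of_four Gᶜ (completeGraph (Fin 4)) v₁ (f v₁) v₃ (f v₃)
          (hfne v₁).symm h13 h14 h23 h24 (hfne v₃).symm
          (iff_of_true e12 (by decide)) (iff_of_true hA (by decide))
          (iff_of_true hB (by decide)) (iff_of_true (c2.mp hB) (by decide))
          (iff_of_true (c1.mp hA) (by decide)) (iff_of_true e34 (by decide))
      · right; left
        have hset : ({v₁, f v₁, v₃, f v₃} : Set V) = {v₁, f v₁, f v₃, v₃} := by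
          ext x; simp only [Set.mem_insert_iff, Set.mem_singleton_iff]; tauto
        rw [hset]
        exact induce_iso_of_four Gᶜ cycle4 v₁ (f v₁) (f v₃) v₃
          (hfne v₁).symm h14 h13 h24.symm.symm h23 (hfne v₃)
          (iff_of_true e12 (by decide)) (iff_of_false hB (by decide))
          (iff_of_true hA (by decide))
          (iff_of_true (c1.mp hA) (by decide))
          (iff_of_false (fun h => hB (c2.mpr h)) (by decide))
          (iff_of_true e34.symm (by decide))
      · right; left
        exact induce_iso_of_four Gᶜ cycle4 v₁ (f v₁) v₃ (f v₃)
          (hfne v₁).symm h13 h14 h23 h24 (hfne v₃).symm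
          (iff_of_true e12 (by decide)) (iff_of_false hA (by decide))
          (iff_of_true hB (by decide)) (iff_of_true (c2.mp hB) (by decide))
          (iff_of_false (fun h => hA (c1.mpr h)) (by decide))
          (iff_of_true e34 (by decide))
      · right; right
        exact induce_iso_of_four Gᶜ twoK2 v₁ (f v₁) v₃ (f v₃)
          (hfne v₁).symm h13 h14 h23 h24 (hfne v₃).symm
          (iff_of_true e12 (by decide)) (iff_of_false hA (by decide))
          (iff_of_false hB (by decide))
          (iff_of_false (fun h => hB (c2.mpr h)) (by decide))
          (iff_of_false (fun h => hA (c1.mpr h)) (by decide))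
          (iff_of_true e34 (by decide))
  · rintro ⟨M, hM, hind⟩
    classical
    choose f hf hfu using fun v => hM.1 (hM.2 v)
    have hGadj : ∀ v, Gᶜ.Adj v (f v) := fun v => M.adj_sub (hf v)
    have hne : ∀ v, f v ≠ v := fun v => (hGadj v).ne'
    have hinv : ∀ v, f (f v) = v := fun v => (hfu (f v) v (hf v).symm).symm
    have hinj : Function.Injective f := fun u v h => by rw [← hinv u, h, hinv]
    refine ⟨f, ?_, hinv, fun v => ⟨hne v, ((compl_adj G v (f v)).mp (hGadj v)).2⟩⟩
    intro u v
    by_cases huv : u = v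
    · subst huv; simp
    have hfufv : f u ≠ f v := fun h => huv (hinj h)
    by_cases hful : f u = v
    · have hfvu : f v = u := by rw [← hful, hinv]
      rw [hful, hfvu]; exact G.adj_comm u v
    have hufv : u ≠ f v := fun h => hful (by rw [h, hinv])
    have hsne : s(u, f u) ≠ s(v, f v) := by
      intro h
      rcases Sym2.eq_iff.mp h with ⟨h1, _⟩ | ⟨h1, _⟩
      · exact huv h1
      · exact hufv h1
    have hgood : GoodProp (Gᶜ.induce {u, f u, v, f v}) := by
      rcases hind u (f u) v (f v) (hf u) (hf v) hsne with h1 | h2 | h3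
      · exact h1.elim fun φ => goodProp_of_iso φ goodProp_complete
      · exact h2.elim fun φ => goodProp_of_iso φ goodProp_cycle4
      · exact h3.elim fun φ => goodProp_of_iso φ goodProp_twoK2
    have hu' : u ∈ ({u, f u, v, f v} : Set V) := by simp
    have hfu' : f u ∈ ({u, f u, v, f v} : Set V) := by simp
    have hv' : v ∈ ({u, f u, v, f v} : Set V) := by simp
    have hfv' : f v ∈ ({u, f u, v, f v} : Set V) := by simp
    have key := hgood ⟨u, hu'⟩ ⟨f u, hfu'⟩ ⟨v, hv'⟩ ⟨f v, hfv'⟩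
      (fun h => huv (congrArg Subtype.val h))
      (fun h => hufv (congrArg Subtype.val h))
      (fun h => hful (congrArg Subtype.val h))
      (fun h => hfufv (congrArg Subtype.val h))
      ((induce_adj' Gᶜ _ _ _).mpr (hGadj u))
      ((induce_adj' Gᶜ _ _ _).mpr (hGadj v))
    rw [induce_adj', induce_adj'] at key
    simp only [compl_adj] at key
    constructor
    · intro h
      by_contra h'
      exact (key.mpr ⟨hfufv, h'⟩).2 h
    · intro h
      by_contra h'
      exact (key.mp ⟨huv, h'⟩).2 h
end

section
/- If G is an opposable graph and H is any graph, then the Cartesian product G □ H is opposable. -/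
/-- The Cartesian product of two simple graphs. -/
def cartProd {α β : Type*} (G : SimpleGraph α) (H : SimpleGraph β) : SimpleGraph (α × β) :=
  SimpleGraph.fromRel fun p q =>
    (p.1 = q.1 ∧ H.Adj p.2 q.2) ∨ (G.Adj p.1 q.1 ∧ p.2 = q.2)

theorem cartProd_opposable {α β : Type*} (G : SimpleGraph α) (H : SimpleGraph β)
    (hG : Opposable G) : Opposable (cartProd G H) := by
  obtain ⟨f, hadj, hinv, hopp⟩ := hG
  have hf : ∀ x y : α, f x = f y → x = y := fun x y h => by
    have := congrArg f h; rwa [hinv, hinv] at this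
  refine ⟨fun p => (f p.1, p.2), ?_, ?_, ?_⟩
  · rintro ⟨a, b⟩ ⟨c, d⟩
    simp only [cartProd, SimpleGraph.fromRel_adj, Prod.mk.injEq, ne_eq]
    constructor
    · rintro ⟨hne, h⟩
      refine ⟨fun ⟨h1, h2⟩ => hne ⟨hf _ _ h1, h2⟩, ?_⟩
      rcases h with (⟨h1, h2⟩ | ⟨h1, h2⟩) | (⟨h1, h2⟩ | ⟨h1, h2⟩)
      · exact Or.inl (Or.inl ⟨congrArg f h1, h2⟩)
      · exact Or.inl (Or.inr ⟨(hadj a c).mp h1, h2⟩)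
      · exact Or.inr (Or.inl ⟨congrArg f h1, h2⟩)
      · exact Or.inr (Or.inr ⟨(hadj c a).mp h1, h2⟩)
    · rintro ⟨hne, h⟩
      refine ⟨fun ⟨h1, h2⟩ => hne ⟨congrArg f h1, h2⟩, ?_⟩
      rcases h with (⟨h1, h2⟩ | ⟨h1, h2⟩) | (⟨h1, h2⟩ | ⟨h1, h2⟩)
      · exact Or.inl (Or.inl ⟨hf _ _ h1, h2⟩)
      · exact Or.inl (Or.inr ⟨(hadj a c).mpr h1, h2⟩)
      · exact Or.inr (Or.inl ⟨hf _ _ h1, h2⟩)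
      · exact Or.inr (Or.inr ⟨(hadj c a).mpr h1, h2⟩)
  · rintro ⟨a, b⟩; exact Prod.ext (hinv a) rfl
  · rintro ⟨a, b⟩
    obtain ⟨hne, hnadj⟩ := hopp a
    constructor
    · intro h; exact hne (congrArg Prod.fst h)
    · intro h
      simp only [cartProd, SimpleGraph.fromRel_adj] at h
      rcases h.2 with (⟨h1, _⟩ | ⟨h1, _⟩) | (⟨h1, _⟩ | ⟨h1, _⟩)
      · exact hne h1.symm
      · exact hnadj h1
      · exact hne h1
      · exact hnadj h1.symm
end

section
/- If G is an opposable graph and H is any graph, then the strong product G ⊠ H is opposable. -/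
/-- The strong product of two simple graphs. -/
def strongProd {α β : Type*} (G : SimpleGraph α) (H : SimpleGraph β) : SimpleGraph (α × β) :=
  SimpleGraph.fromRel fun p q =>
    (p.1 = q.1 ∨ G.Adj p.1 q.1) ∧ (p.2 = q.2 ∨ H.Adj p.2 q.2)

theorem strongProd_opposable {α β : Type*} (G : SimpleGraph α) (H : SimpleGraph β)
    (hG : Opposable G) : Opposable (strongProd G H) := by
  obtain ⟨f, hadj, hinv, hfix⟩ := hG
  refine ⟨fun p => (f p.1, p.2), ?_, ?_, ?_⟩
  · rintro ⟨a, b⟩ ⟨c, d⟩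
    simp only [strongProd, SimpleGraph.fromRel_adj, ne_eq, Prod.mk.injEq, not_and]
    constructor
    · rintro ⟨hne, h⟩
      refine ⟨fun h1 h2 => hne ?_ ?_, ?_⟩
      · have := hinv a; have := hinv c
        have : f (f a) = f (f c) := by rw [h1]
        rwa [hinv, hinv] at this
      · exact h2
      · rcases h with ⟨h1, h2⟩ | ⟨h1, h2⟩
        · exact Or.inl ⟨h1.imp (fun e => by rw [e]) (fun e => (hadj a c).1 e), h2⟩
        · exact Or.inr ⟨h1.imp (fun e => by rw [e]) (fun e => (hadj c a).1 e), h2⟩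
    · rintro ⟨hne, h⟩
      have finj : ∀ x y : α, f x = f y → x = y := fun x y e => by
        have : f (f x) = f (f y) := by rw [e]
        rwa [hinv, hinv] at this
      refine ⟨fun h1 h2 => hne (by rw [h1]) h2, ?_⟩
      rcases h with ⟨h1, h2⟩ | ⟨h1, h2⟩
      · exact Or.inl ⟨h1.imp (finj a c) (fun e => (hadj a c).2 e), h2⟩
      · exact Or.inr ⟨h1.imp (finj c a) (fun e => (hadj c a).2 e), h2⟩
  · rintro ⟨a, b⟩; simp [hinv a]
  · rintro ⟨a, b⟩
    refine ⟨fun h => (hfix a).1 (congrArg Prod.fst h), ?_⟩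
    simp only [strongProd, SimpleGraph.fromRel_adj]
    rintro ⟨-, ⟨h1, -⟩ | ⟨h1, -⟩⟩
    · rcases h1 with e | adj
      · exact (hfix a).1 e.symm
      · exact (hfix a).2 adj
    · rcases h1 with e | adj
      · exact (hfix a).1 e
      · exact (hfix a).2 ((hadj a (f a)).2 (by rwa [hinv]))
end

section
/- If G is an opposable graph and H is any graph, then the lexicographic product G • H is opposable. -/
/-- The lexicographic product of two simple graphs. -/
def lexProd {α β : Type*} (G : SimpleGraph α) (H : SimpleGraph β) : SimpleGraph (α × β) :=
  SimpleGraph.fromRel fun p q => G.Adj p.1 q.1 ∨ (p.1 = q.1 ∧ H.Adj p.2 q.2)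

theorem lexProd_opposable {α β : Type*} (G : SimpleGraph α) (H : SimpleGraph β)
    (hG : Opposable G) : Opposable (lexProd G H) := by
  obtain ⟨f, hadj, hinv, hne⟩ := hG
  have hinj : ∀ a b : α, f a = f b → a = b := fun a b h => by
    have := hinv a; rw [h, hinv] at this; exact this.symm
  refine ⟨fun p => (f p.1, p.2), ?_, ?_, ?_⟩
  · rintro ⟨a, x⟩ ⟨b, y⟩
    simp only [lexProd, SimpleGraph.fromRel_adj, ne_eq, Prod.mk.injEq, not_and]
    constructor
    · rintro ⟨h1, h2⟩
      refine ⟨fun hf => h1 (hinj a b hf), ?_⟩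
      rcases h2 with (h | ⟨rfl, h⟩) | (h | ⟨rfl, h⟩)
      · exact Or.inl (Or.inl ((hadj a b).mp h))
      · exact Or.inl (Or.inr ⟨rfl, h⟩)
      · exact Or.inr (Or.inl ((hadj b a).mp h))
      · exact Or.inr (Or.inr ⟨rfl, h⟩)
    · rintro ⟨h1, h2⟩
      refine ⟨fun hf => h1 (congrArg f hf), ?_⟩
      rcases h2 with (h | ⟨hab, h⟩) | (h | ⟨hab, h⟩)
      · exact Or.inl (Or.inl ((hadj a b).mpr h))
      · exact Or.inl (Or.inr ⟨hinj a b hab, h⟩)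
      · exact Or.inr (Or.inl ((hadj b a).mpr h))
      · exact Or.inr (Or.inr ⟨hinj b a hab, h⟩)
  · rintro ⟨a, x⟩; simp [hinv a]
  · rintro ⟨a, x⟩
    obtain ⟨h1, h2⟩ := hne a
    constructor
    · simp [h1]
    · simp only [lexProd, SimpleGraph.fromRel_adj, not_and, not_or]
      intro _
      exact ⟨⟨h2, fun h _ => h1 h.symm⟩, fun h => h2 ((hadj a (f a)).mpr (by rw [hinv]; exact h)), fun h _ => h1 h⟩
end

section
/- If G is an opposable graph and H is any graph, then the co-normal product G * H is opposable. -/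
/-- The co-normal product of two simple graphs. -/
def conormalProd {α β : Type*} (G : SimpleGraph α) (H : SimpleGraph β) : SimpleGraph (α × β) :=
  SimpleGraph.fromRel fun p q => G.Adj p.1 q.1 ∨ H.Adj p.2 q.2

theorem conormalProd_opposable {α β : Type*} (G : SimpleGraph α) (H : SimpleGraph β)
    (hG : Opposable G) : Opposable (conormalProd G H) := by
  obtain ⟨f, hadj, hinv, hfix⟩ := hG
  have finj : Function.Injective f := Function.LeftInverse.injective hinv
  refine ⟨fun p => (f p.1, p.2), ?_, ?_, ?_⟩
  · rintro ⟨a, b⟩ ⟨c, d⟩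
    simp only [conormalProd, SimpleGraph.fromRel_adj, ne_eq, Prod.mk.injEq, not_and]
    constructor
    · rintro ⟨hne, h⟩
      refine ⟨fun h1 h2 => hne (finj h1) h2, ?_⟩
      rcases h with (hg | hh) | (hg | hh)
      · exact Or.inl (Or.inl ((hadj a c).mp hg))
      · exact Or.inl (Or.inr hh)
      · exact Or.inr (Or.inl ((hadj c a).mp hg))
      · exact Or.inr (Or.inr hh)
    · rintro ⟨hne, h⟩
      refine ⟨fun h1 h2 => hne (congrArg f h1) h2, ?_⟩
      rcases h with (hg | hh) | (hg | hh)
      · exact Or.inl (Or.inl ((hadj a c).mpr hg))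
      · exact Or.inl (Or.inr hh)
      · exact Or.inr (Or.inl ((hadj c a).mpr hg))
      · exact Or.inr (Or.inr hh)
  · intro p; simp [hinv p.1]
  · rintro ⟨a, b⟩
    constructor
    · intro h
      exact (hfix a).1 (congrArg Prod.fst h)
    · intro h
      simp only [conormalProd, SimpleGraph.fromRel_adj] at h
      rcases h.2 with (hg | hh) | (hg | hh)
      · exact (hfix a).2 hg
      · exact H.loopless.irrefl b hh
      · exact (hfix a).2 hg.symm
      · exact H.loopless.irrefl b hh
end

section
/- Let φ(g₁,g₂,h₁,h₂) be a relation on V(G)×V(G)×V(H)×V(H) defining a graph product G φ H on vertex set V(G)×V(H) (with distinct (g₁,h₁),(g₂,h₂) adjacent iff φ(g₁,g₂,h₁,h₂) holds), such that φ is invariant under applying any automorphism of G to the first two coordinates, and such that whenever h₁ = h₂ and g₁g₂ ∉ E(G), φ(g₁,g₂,h₁,h₂) fails. If G is opposable, then G φ H is opposable. -/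
theorem graphProd_opposable_of_logic {α β : Type*} (G : SimpleGraph α) (H : SimpleGraph β)
    (φ : α → α → β → β → Prop)
    (hsymm : ∀ g₁ g₂ h₁ h₂, φ g₁ g₂ h₁ h₂ → φ g₂ g₁ h₂ h₁)
    (hinv : ∀ (e : G ≃g G) g₁ g₂ h₁ h₂, φ (e g₁) (e g₂) h₁ h₂ ↔ φ g₁ g₂ h₁ h₂)
    (hcond : ∀ g₁ g₂ h₁ h₂, h₁ = h₂ → ¬ G.Adj g₁ g₂ → ¬ φ g₁ g₂ h₁ h₂)
    (hG : Opposable G) :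
    Opposable (SimpleGraph.fromRel fun p q : α × β => φ p.1 q.1 p.2 q.2) := by
  obtain ⟨f, hadj, hinvol, hfix⟩ := hG
  have hfinj : Function.Injective f := Function.Involutive.injective hinvol
  let e : G ≃g G :=
    { toEquiv := Function.Involutive.toPerm f hinvol
      map_rel_iff' := fun {a b} => (hadj a b).symm }
  refine ⟨fun p => (f p.1, p.2), ?_, ?_, ?_⟩
  · rintro ⟨g₁, h₁⟩ ⟨g₂, h₂⟩
    simp only [SimpleGraph.fromRel_adj]
    constructor
    · rintro ⟨hne, hφ⟩
      refine ⟨?_, ?_⟩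
      · intro h; apply hne; rw [Prod.mk.injEq] at h ⊢
        exact ⟨hfinj h.1, h.2⟩
      · rcases hφ with h | h
        · exact Or.inl ((hinv e g₁ g₂ h₁ h₂).2 h)
        · exact Or.inr ((hinv e g₂ g₁ h₂ h₁).2 h)
    · rintro ⟨hne, hφ⟩
      refine ⟨?_, ?_⟩
      · intro h; apply hne; rw [Prod.mk.injEq] at h ⊢
        exact ⟨congrArg f h.1, h.2⟩
      · rcases hφ with h | h
        · exact Or.inl ((hinv e g₁ g₂ h₁ h₂).1 h)
        · exact Or.inr ((hinv e g₂ g₁ h₂ h₁).1 h)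
  · rintro ⟨g, h⟩; simp [hinvol g]
  · rintro ⟨g, h⟩
    obtain ⟨hne, hnadj⟩ := hfix g
    constructor
    · intro hc; exact hne (congrArg Prod.fst hc)
    · intro hc
      rw [SimpleGraph.fromRel_adj] at hc
      rcases hc.2 with hφ | hφ
      · exact hcond g (f g) h h rfl hnadj hφ
      · exact hcond (f g) g h h rfl (fun a => hnadj a.symm) hφ
end

section
/- If G is a graph possessing a vertex u and a set S with u ∈ S ⊆ N[u] such that the induced subgraph G − S is opposable, and H is a graph containing a universal vertex, then the strong product G ⊠ H is almost opposable. -/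
lemma strongProd_adj {α β : Type*} (G : SimpleGraph α) (H : SimpleGraph β) (p q : α × β) :
    (strongProd G H).Adj p q ↔
      p ≠ q ∧ (p.1 = q.1 ∨ G.Adj p.1 q.1) ∧ (p.2 = q.2 ∨ H.Adj p.2 q.2) := by
  simp only [strongProd, SimpleGraph.fromRel_adj]
  constructor
  · rintro ⟨hne, h | h⟩
    · exact ⟨hne, h⟩
    · refine ⟨hne, ?_, ?_⟩
      · rcases h.1 with h1 | h1
        · exact Or.inl h1.symm
        · exact Or.inr h1.symm
      · rcases h.2 with h2 | h2
        · exact Or.inl h2.symm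
        · exact Or.inr h2.symm
  · rintro ⟨hne, h⟩
    exact ⟨hne, Or.inl h⟩

theorem strongProd_universal_almostOpposable {α β : Type*}
    (G : SimpleGraph α) (H : SimpleGraph β)
    (u : α) (S : Set α) (hu : u ∈ S) (hS : ∀ v ∈ S, v = u ∨ G.Adj u v)
    (hop : ∃ f, IsOppositionOn G Sᶜ f)
    (w : β) (hw : ∀ y, y ≠ w → H.Adj w y) :
    AlmostOpposable (strongProd G H) := by
  obtain ⟨g, hg1, hg2, hg3, hg4⟩ := hop
  refine ⟨(u, w), {p | p.1 ∈ S}, hu, ?_, fun p => (g p.1, p.2), ?_, ?_, ?_, ?_⟩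
  · rintro ⟨a, b⟩ ha
    by_cases hab : (a, b) = (u, w)
    · exact Or.inl hab
    · refine Or.inr ((strongProd_adj G H _ _).2 ⟨fun h => hab h.symm, ?_, ?_⟩)
      · rcases hS a ha with h | h
        · exact Or.inl h.symm
        · exact Or.inr h
      · by_cases hb : b = w
        · exact Or.inl hb.symm
        · exact Or.inr (hw b hb)
  · rintro ⟨a, b⟩ ha
    exact hg1 a ha
  · rintro ⟨a, b⟩ ha ⟨a', b'⟩ ha'
    have hinj : a = a' ↔ g a = g a' := by
      constructor
      · rintro rfl; rfl
      · intro h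
        have := congrArg g h
        rwa [hg3 a ha, hg3 a' ha'] at this
    rw [strongProd_adj, strongProd_adj]
    simp only [Prod.mk.injEq, ne_eq]
    rw [← hg2 a ha a' ha', ← hinj]
  · rintro ⟨a, b⟩ ha
    simp only [Prod.mk.injEq]
    rw [hg3 a ha]
    simp
  · rintro ⟨a, b⟩ ha
    constructor
    · simp only [Prod.mk.injEq, ne_eq, not_and]
      intro h
      exact absurd h (hg4 a ha).1
    · rw [strongProd_adj]
      rintro ⟨hne, h1, h2⟩
      rcases h1 with h | h
      · exact (hg4 a ha).1 h.symm
      · exact (hg4 a ha).2 h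
end

section
/- For every k ≥ 1 and positive integers n₁,…,n_k, the strong product of paths ⊠_{i=1}^k P_{n_i} is almost opposable. -/
/-- The path on `n` vertices. -/
def pathG (n : ℕ) : SimpleGraph (Fin n) :=
  SimpleGraph.fromRel fun i j => (i : ℕ) + 1 = (j : ℕ)

/-- The strong product of the paths `P_{n 0}, …, P_{n (k-1)}`. -/
def strongGrid (k : ℕ) (n : Fin k → ℕ) : SimpleGraph (∀ i, Fin (n i)) :=
  SimpleGraph.fromRel fun p q => ∀ i, p i = q i ∨ (pathG (n i)).Adj (p i) (q i)

lemma strongGrid_adj (k : ℕ) (n : Fin k → ℕ) (p q : ∀ i, Fin (n i)) :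
    (strongGrid k n).Adj p q ↔ p ≠ q ∧
      ∀ i, (p i : ℕ) = q i ∨ (p i : ℕ) + 1 = q i ∨ (q i : ℕ) + 1 = p i := by
  simp only [strongGrid, pathG, SimpleGraph.fromRel_adj, Fin.ext_iff, ne_eq]
  constructor
  · rintro ⟨hne, h | h⟩ <;> refine ⟨hne, fun i => ?_⟩ <;> have := h i <;> omega
  · rintro ⟨hne, h⟩
    exact ⟨hne, Or.inl fun i => by have := h i; omega⟩

theorem strongGrid_almostOpposable (k : ℕ) (hk : 1 ≤ k) (n : Fin k → ℕ)
    (hn : ∀ i, 1 ≤ n i) : AlmostOpposable (strongGrid k n) := by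
  set S : Set (∀ i, Fin (n i)) :=
    {p | ∀ i, n i ≤ 2 * (p i : ℕ) + 2 ∧ 2 * (p i : ℕ) ≤ n i} with hS
  set u : ∀ i, Fin (n i) := fun i => ⟨(n i - 1) / 2, by have := hn i; omega⟩ with hu
  set f : (∀ i, Fin (n i)) → (∀ i, Fin (n i)) := fun p i => (p i).rev with hf
  have hrev : ∀ (p : ∀ i, Fin (n i)) (i : Fin k), ((f p i : ℕ)) = n i - 1 - (p i : ℕ) := by
    intro p i; simp only [hf, Fin.val_rev]; omega
  have hSclosed : ∀ p ∈ S, f p ∈ S := by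
    intro p hp i
    have h1 := hp i
    have h2 := (p i).isLt
    have := hrev p i
    constructor <;> omega
  refine ⟨u, S, ?_, ?_, f, ?_, ?_, ?_, ?_⟩
  · intro i
    have h0 := hn i
    have h1 : ((u i : ℕ)) = (n i - 1) / 2 := rfl
    constructor <;> omega
  · intro v hv
    by_cases hvu : v = u
    · exact Or.inl hvu
    · refine Or.inr ((strongGrid_adj k n u v).2 ⟨Ne.symm hvu, fun i => ?_⟩)
      have h1 := hv i
      have h2 := (v i).isLt
      have : (u i : ℕ) = (n i - 1) / 2 := rfl
      omega
  · intro v hv hfv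
    exact hv (by simpa [hf, Fin.rev_rev] using hSclosed _ hfv)
  · intro p _ q _
    rw [strongGrid_adj, strongGrid_adj]
    constructor <;> rintro ⟨hne, h⟩ <;> refine ⟨?_, fun i => ?_⟩
    · intro he; apply hne; funext i
      have := congrFun he i
      simpa [hf, Fin.rev_inj] using this
    · have := h i
      have := hrev p i; have := hrev q i
      have := (p i).isLt; have := (q i).isLt
      omega
    · intro he; exact hne (by rw [he])
    · have := h i
      have := hrev p i; have := hrev q i
      have := (p i).isLt; have := (q i).isLt
      omega
  · intro v _
    funext i; simp [hf, Fin.rev_rev]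
  · intro v hv
    simp only [Set.mem_compl_iff, hS, Set.mem_setOf_eq] at hv
    push_neg at hv
    obtain ⟨i, hi⟩ := hv
    have h2 := (v i).isLt
    have h3 := hrev v i
    have hne : f v ≠ v := by
      intro he
      have := congrFun he i
      have : ((f v i : ℕ)) = v i := by rw [this]
      omega
    refine ⟨hne, fun hadj => ?_⟩
    obtain ⟨_, h⟩ := (strongGrid_adj k n v (f v)).1 hadj
    have := h i
    omega
end

section
/- For k ≥ 1 and positive integers n₁,…,n_k, the Cartesian grid □_{i=1}^k P_{n_i} is opposable if at least two of the n_i are even, and is almost opposable if at most one of the n_i is even. -/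
/-- The Cartesian product of the paths `P_{n 0}, …, P_{n (k-1)}`. -/
def cartGrid (k : ℕ) (n : Fin k → ℕ) : SimpleGraph (∀ i, Fin (n i)) :=
  SimpleGraph.fromRel fun p q =>
    ∃ i, (pathG (n i)).Adj (p i) (q i) ∧ ∀ j, j ≠ i → p j = q j

lemma pathG_adj {m : ℕ} {a b : Fin m} :
    (pathG m).Adj a b ↔ ((a : ℕ) + 1 = (b : ℕ) ∨ (b : ℕ) + 1 = (a : ℕ)) := by
  rw [pathG, SimpleGraph.fromRel_adj]
  constructor
  · rintro ⟨hne, h⟩; exact h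
  · intro h
    refine ⟨fun he => ?_, h⟩
    subst he; omega

lemma cartGrid_adj {k : ℕ} {n : Fin k → ℕ} {p q : ∀ i, Fin (n i)} :
    (cartGrid k n).Adj p q ↔
      ∃ i, (pathG (n i)).Adj (p i) (q i) ∧ ∀ j, j ≠ i → p j = q j := by
  rw [cartGrid, SimpleGraph.fromRel_adj]
  constructor
  · rintro ⟨hne, h | h⟩
    · exact h
    · obtain ⟨i, hi, hj⟩ := h
      exact ⟨i, hi.symm, fun j hji => (hj j hji).symm⟩
  · rintro ⟨i, hi, hj⟩
    refine ⟨fun hpq => ?_, Or.inl ⟨i, hi, hj⟩⟩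
    rw [hpq] at hi
    exact (pathG (n i)).irrefl hi

theorem cartGrid_opposable_or_almostOpposable (k : ℕ) (hk : 1 ≤ k) (n : Fin k → ℕ)
    (hn : ∀ i, 1 ≤ n i) :
    ((∃ i j, i ≠ j ∧ Even (n i) ∧ Even (n j)) → Opposable (cartGrid k n)) ∧
      ((∀ i j, Even (n i) → Even (n j) → i = j) → AlmostOpposable (cartGrid k n)) := by
  classical
  set f : (∀ i, Fin (n i)) → (∀ i, Fin (n i)) := fun p i => (p i).rev with hfdef
  have hfv : ∀ (p : ∀ i, Fin (n i)) (i : Fin k), ((f p i : ℕ)) = n i - ((p i : ℕ) + 1) :=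
    fun p i => Fin.val_rev (p i)
  have hinv : ∀ p, f (f p) = p := fun p => funext fun i => Fin.rev_rev _
  have hmono : ∀ p q, (cartGrid k n).Adj p q → (cartGrid k n).Adj (f p) (f q) := by
    intro p q h
    rw [cartGrid_adj] at h ⊢
    obtain ⟨i, hi, hj⟩ := h
    refine ⟨i, ?_, fun j hji => by simp only [hfdef]; rw [hj j hji]⟩
    rw [pathG_adj] at hi ⊢
    have h1 := (p i).isLt
    have h2 := (q i).isLt
    rw [hfv, hfv]
    omega
  have hauto : ∀ p q, (cartGrid k n).Adj p q ↔ (cartGrid k n).Adj (f p) (f q) := by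
    intro p q
    refine ⟨hmono p q, fun h => ?_⟩
    have := hmono _ _ h
    rwa [hinv, hinv] at this
  constructor
  · rintro ⟨i, j, hij, hei, hej⟩
    obtain ⟨a, ha⟩ := hei
    obtain ⟨b, hb⟩ := hej
    have key : ∀ (p : ∀ i, Fin (n i)) l, p l = f p l → ¬ Even (n l) := by
      intro p l h hev
      obtain ⟨c, hc⟩ := hev
      have hv := congrArg Fin.val h
      rw [hfv] at hv
      have := (p l).isLt
      omega
    refine ⟨f, hauto, hinv, fun p => ⟨?_, ?_⟩⟩
    · intro h
      exact key p i (congrFun h.symm i) ⟨a, ha⟩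
    · intro h
      rw [cartGrid_adj] at h
      obtain ⟨i', hi', hj'⟩ := h
      rcases eq_or_ne i i' with rfl | hne
      · exact key p j (hj' j (fun hc => hij hc.symm)) ⟨b, hb⟩
      · exact key p i (hj' i hne) ⟨a, ha⟩
  · intro hodd
    have hu2 : ∀ i, n i / 2 < n i := fun i => by have := hn i; omega
    set u : ∀ i, Fin (n i) := fun i => ⟨n i / 2, hu2 i⟩ with hudef
    have huv : ∀ i, (u i : ℕ) = n i / 2 := fun i => rfl
    refine ⟨u, {u, f u}, Or.inl rfl, ?_, f, ?_, fun p _ q _ => hauto p q,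
      fun p _ => hinv p, ?_⟩
    · rintro v (rfl | rfl)
      · exact Or.inl rfl
      · by_cases hfu : f u = u
        · exact Or.inl hfu
        · right
          have hex : ∃ i, ¬ (2 * (n i / 2) + 1 = n i) := by
            by_contra hc
            push_neg at hc
            apply hfu
            funext i
            apply Fin.ext
            rw [hfv]
            have := hc i
            have := huv i
            omega
          obtain ⟨i, hi⟩ := hex
          have heni : Even (n i) := by
            rcases Nat.even_or_odd (n i) with h | h
            · exact h
            · obtain ⟨c, hc⟩ := h; omega
          rw [cartGrid_adj]
          refine ⟨i, ?_, ?_⟩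
          · rw [pathG_adj, hfv, huv]
            obtain ⟨c, hc⟩ := heni
            have := hn i
            omega
          · intro j hji
            apply Fin.ext
            rw [hfv]
            have hnj : ¬ Even (n j) := fun h => hji (hodd j i h heni)
            rcases Nat.even_or_odd (n j) with h | h
            · exact absurd h hnj
            · obtain ⟨c, hc⟩ := h
              have := hn j
              have := huv j
              omega
    · intro p hp
      simp only [Set.mem_compl_iff, Set.mem_insert_iff, Set.mem_singleton_iff, not_or] at hp ⊢
      obtain ⟨h1, h2⟩ := hp
      constructor
      · intro h
        apply h2
        have := congrArg f h
        rwa [hinv] at this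
      · intro h
        apply h1
        have := congrArg f h
        rwa [hinv, hinv] at this
    · intro p hp
      simp only [Set.mem_compl_iff, Set.mem_insert_iff, Set.mem_singleton_iff, not_or] at hp
      obtain ⟨h1, h2⟩ := hp
      constructor
      · intro h
        apply h1
        funext i
        apply Fin.ext
        have hv := congrArg Fin.val (congrFun h i)
        rw [hfv] at hv
        have := (p i).isLt
        rw [huv]
        omega
      · intro h
        rw [cartGrid_adj] at h
        obtain ⟨i, hi, hj⟩ := h
        rw [pathG_adj, hfv] at hi
        have hJ : ∀ j, j ≠ i → (p j : ℕ) = n j - ((p j : ℕ) + 1) := by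
          intro j hji
          have := congrArg Fin.val (hj j hji)
          rwa [hfv] at this
        have hlt := (p i).isLt
        rcases hi with hcase | hcase
        · apply h2
          funext j
          apply Fin.ext
          rw [hfv, huv]
          by_cases hji : j = i
          · subst hji; omega
          · have := hJ j hji
            have := (p j).isLt
            omega
        · apply h1
          funext j
          apply Fin.ext
          rw [huv]
          by_cases hji : j = i
          · subst hji; omega
          · have := hJ j hji
            have := (p j).isLt
            omega
end

section
/- If n is even, then the n × m Knight's grid is opposable, via the map (x,y) ↦ (n−x−1, y). -/
/-- The `n × m` Knight's grid. -/
def knightGrid (n m : ℕ) : SimpleGraph (Fin n × Fin m) :=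
  SimpleGraph.fromRel fun p q =>
    (|(p.1 : ℤ) - (q.1 : ℤ)| = 1 ∧ |(p.2 : ℤ) - (q.2 : ℤ)| = 2) ∨
    (|(p.1 : ℤ) - (q.1 : ℤ)| = 2 ∧ |(p.2 : ℤ) - (q.2 : ℤ)| = 1)

lemma rev_int {n : ℕ} (i : Fin n) : ((i.rev : Fin n) : ℤ) = (n : ℤ) - 1 - i := by
  have h := i.isLt
  simp [Fin.val_rev]
  omega

theorem knightGrid_even_opposable (n m : ℕ) (hn : Even n) :
    IsOpposition (knightGrid n m) (fun p => (p.1.rev, p.2)) ∧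
      Opposable (knightGrid n m) := by
  have e : ∀ a b : ℤ, |(n:ℤ)-1-a-((n:ℤ)-1-b)| = |a - b| := by
    intro a b
    rw [show (n:ℤ)-1-a-((n:ℤ)-1-b) = b - a by ring, abs_sub_comm]
  have key : IsOpposition (knightGrid n m) (fun p => (p.1.rev, p.2)) := by
    refine ⟨?_, ?_, ?_⟩
    · intro u v
      simp only [knightGrid, SimpleGraph.fromRel_adj, ne_eq, Prod.ext_iff, rev_int, e]
      exact and_congr_left fun _ =>
        not_congr (and_congr_left fun _ => ⟨fun h => by rw [h], fun h => Fin.rev_injective h⟩)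
    · intro v; simp [Fin.rev_rev]
    · intro v
      have hv := v.1.isLt
      obtain ⟨k, hk⟩ := hn
      constructor
      · intro h
        have h1 : (v.1.rev : ℕ) = v.1 := congrArg Fin.val (Prod.ext_iff.mp h).1
        rw [Fin.val_rev] at h1
        omega
      · simp only [knightGrid, SimpleGraph.fromRel_adj]
        rintro ⟨_, h | h⟩ <;> simp [rev_int, abs_eq, sub_eq_iff_eq_add] at h
  exact ⟨key, _, key⟩
end

section
/- If n is even, then the n × m Bishop's grid is opposable, via the map (x,y) ↦ (n−x−1, y). -/
/-- The `n × m` Bishop's grid. -/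
def bishopGrid (n m : ℕ) : SimpleGraph (Fin n × Fin m) :=
  SimpleGraph.fromRel fun p q =>
    |(p.1 : ℤ) - (q.1 : ℤ)| = |(p.2 : ℤ) - (q.2 : ℤ)|

theorem bishopGrid_even_opposable (n m : ℕ) (hn : Even n) :
    IsOpposition (bishopGrid n m) (fun p => (p.1.rev, p.2)) ∧
      Opposable (bishopGrid n m) := by
  have hrev : ∀ x : Fin n, ((x.rev : ℤ)) = (n : ℤ) - 1 - (x : ℤ) := by
    intro x
    have h := Fin.val_rev x
    have hx := x.isLt
    omega
  have hne : ∀ x : Fin n, x.rev ≠ x := by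
    intro x hx
    have h := Fin.val_rev x
    have h2 := congrArg Fin.val hx
    obtain ⟨k, hk⟩ := hn
    have := x.isLt
    simp only [Fin.val_rev] at h2
    omega
  have habs : ∀ x1 x2 : Fin n, |(x1.rev : ℤ) - (x2.rev : ℤ)| = |(x1 : ℤ) - (x2 : ℤ)| := by
    intro x1 x2
    rw [hrev, hrev,
      show (n:ℤ) - 1 - x1 - ((n:ℤ) - 1 - x2) = (x2:ℤ) - x1 by ring, abs_sub_comm]
  have hop : IsOpposition (bishopGrid n m) (fun p => (p.1.rev, p.2)) := by
    refine ⟨?_, ?_, ?_⟩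
    · intro u v
      simp only [bishopGrid, SimpleGraph.fromRel_adj]
      constructor
      · rintro ⟨h1, h2⟩
        refine ⟨?_, ?_⟩
        · intro h; apply h1
          have := congrArg (fun p : Fin n × Fin m => ((p.1.rev : Fin n), p.2)) h
          simpa [Fin.rev_rev] using this
        · simpa only [habs] using h2
      · rintro ⟨h1, h2⟩
        refine ⟨?_, ?_⟩
        · rintro rfl; exact h1 rfl
        · simpa only [habs] using h2
    · intro v; simp [Fin.rev_rev]
    · intro v
      refine ⟨?_, ?_⟩
      · intro h
        exact hne v.1 (congrArg Prod.fst h)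
      · simp only [bishopGrid, SimpleGraph.fromRel_adj]
        rintro ⟨h1, h2⟩
        have h0 : |(v.1 : ℤ) - (v.1.rev : ℤ)| = 0 := by
          rcases h2 with h | h
          · simpa using h
          · rw [abs_sub_comm]; simpa using h
        rw [hrev] at h0
        obtain ⟨k, hk⟩ := hn
        have hv := v.1.isLt
        have := abs_eq_zero.mp h0
        omega
  exact ⟨hop, ⟨_, hop⟩⟩
end

section
/- The n × m Rook's grid is opposable if and only if both n and m are even; when both are even, (x,y) ↦ (n−x−1, m−y−1) is an opposition. -/
/-- The `n × m` Rook's grid. -/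
def rookGrid (n m : ℕ) : SimpleGraph (Fin n × Fin m) :=
  SimpleGraph.fromRel fun p q => p.1 = q.1 ∨ p.2 = q.2

lemma rookGrid_adj {n m : ℕ} {p q : Fin n × Fin m} :
    (rookGrid n m).Adj p q ↔ p ≠ q ∧ (p.1 = q.1 ∨ p.2 = q.2) := by
  simp only [rookGrid, SimpleGraph.fromRel_adj]
  constructor
  · rintro ⟨h, h'⟩; exact ⟨h, by tauto⟩
  · rintro ⟨h, h'⟩; exact ⟨h, Or.inl h'⟩

-- even card from fixed-point-free involution on a Finset
lemma even_card_of_inv {α : Type*} [DecidableEq α] (σ : α → α) (hinv : ∀ a, σ (σ a) = a) :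
    ∀ s : Finset α, (∀ a ∈ s, σ a ∈ s) → (∀ a ∈ s, σ a ≠ a) → Even s.card := by
  intro s
  induction s using Finset.strongInduction with
  | _ s ih =>
    intro hmap hne
    rcases s.eq_empty_or_nonempty with rfl | ⟨a, ha⟩
    · simp
    · have hsa : σ a ∈ s := hmap a ha
      have hne' : σ a ≠ a := hne a ha
      set t := s \ {a, σ a} with ht
      have hss : t ⊂ s := by
        apply Finset.ssubset_iff_of_subset (Finset.sdiff_subset) |>.mpr
        exact ⟨a, ha, by simp [ht]⟩
      have hcard : s.card = t.card + 2 := by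
        have hsub : ({a, σ a} : Finset α) ⊆ s := by
          intro x hx; simp at hx; rcases hx with rfl | rfl <;> assumption
        have hle := Finset.card_le_card hsub
        have h2 : ({a, σ a} : Finset α).card = 2 := Finset.card_pair (Ne.symm hne')
        rw [ht, Finset.card_sdiff_of_subset hsub]
        omega
      have : Even t.card := by
        apply ih t hss
        · intro b hb
          simp only [ht, Finset.mem_sdiff, Finset.mem_insert, Finset.mem_singleton] at hb ⊢
          push_neg at hb ⊢
          refine ⟨hmap b hb.1, ?_, ?_⟩
          · intro h; apply hb.2.2; have := congrArg σ h; rwa [hinv] at this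
          · intro h; apply hb.2.1; have := congrArg σ h; rwa [hinv, hinv] at this
        · intro b hb; exact hne b (Finset.mem_sdiff.mp hb).1
      rw [hcard]
      exact this.add even_two

lemma even_of_inv {n : ℕ} (σ : Fin n → Fin n) (hinv : ∀ a, σ (σ a) = a)
    (hne : ∀ a, σ a ≠ a) : Even n := by
  have := even_card_of_inv σ hinv Finset.univ (by simp) (by simp [hne])
  simpa using this

lemma rev_opp {n m : ℕ} (hn : Even n) (hm : Even m) :
    IsOpposition (rookGrid n m) (fun p => (p.1.rev, p.2.rev)) := by
  have hrev : ∀ {k : ℕ}, Even k → ∀ x : Fin k, x.rev ≠ x := by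
    intro k hk x h
    have h2 := congrArg Fin.val h
    rw [Fin.val_rev] at h2
    obtain ⟨t, ht⟩ := hk
    have := x.isLt
    omega
  refine ⟨?_, ?_, ?_⟩
  · intro u v
    simp [rookGrid_adj, Prod.ext_iff, Fin.rev_inj]
  · intro v; simp [Fin.rev_rev]
  · intro v
    constructor
    · intro h; exact hrev hn v.1 (congrArg Prod.fst h)
    · intro h
      rcases (rookGrid_adj.mp h).2 with h1 | h2
      · exact hrev hn v.1 h1.symm
      · exact hrev hm v.2 h2.symm

lemma opp_swap {n m : ℕ} (f : Fin n × Fin m → Fin n × Fin m)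
    (hf : IsOpposition (rookGrid n m) f) :
    IsOpposition (rookGrid m n) (fun q => Prod.swap (f q.swap)) := by
  obtain ⟨hadj, hinv, hopp⟩ := hf
  have hA : ∀ (p q : Fin m × Fin n),
      (rookGrid m n).Adj p q ↔ (rookGrid n m).Adj p.swap q.swap := by
    intro p q
    simp only [rookGrid_adj, Prod.ext_iff, Prod.fst_swap, Prod.snd_swap, ne_eq]
    tauto
  refine ⟨?_, ?_, ?_⟩
  · intro u v
    rw [hA, hA]
    simpa using hadj u.swap v.swap
  · intro v
    simp [hinv]
  · intro v
    constructor
    · intro h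
      exact (hopp v.swap).1 (by simpa using congrArg Prod.swap h)
    · intro h
      rw [hA] at h
      simp only [Prod.swap_swap] at h
      exact (hopp v.swap).2 h

lemma even_left {n m : ℕ} (hm : 2 ≤ m) (f : Fin n × Fin m → Fin n × Fin m)
    (hf : IsOpposition (rookGrid n m) f) : Even n := by
  obtain ⟨hadj, hinv, hopp⟩ := hf
  have finj : Function.Injective f := fun a b h => by rw [← hinv a, h, hinv b]
  set y0 : Fin m := ⟨0, by omega⟩ with hy0def
  set y1 : Fin m := ⟨1, by omega⟩ with hy1def
  have hy : y0 ≠ y1 := by simp [hy0def, hy1def, Fin.ext_iff]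
  have hrow : ∀ x : Fin n, ∀ y : Fin m, (f (x, y)).1 = (f (x, y0)).1 := by
    intro x
    have hxy : ∀ (y y' : Fin m), y ≠ y' → (rookGrid n m).Adj (f (x, y)) (f (x, y')) := by
      intro y y' hyy
      exact (hadj _ _).mp (rookGrid_adj.mpr ⟨by simp [Prod.ext_iff, hyy], Or.inl rfl⟩)
    have h01 := rookGrid_adj.mp (hxy y0 y1 hy)
    rcases h01.2 with hr | hc
    · intro y
      by_cases h0 : y = y0
      · rw [h0]
      by_cases h1 : y = y1
      · rw [h1, ← hr]
      by_contra hne1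
      have a0 := rookGrid_adj.mp (hxy y y0 h0)
      have a1 := rookGrid_adj.mp (hxy y y1 h1)
      have c0 : (f (x, y)).2 = (f (x, y0)).2 := a0.2.resolve_left hne1
      have c1 : (f (x, y)).2 = (f (x, y1)).2 := a1.2.resolve_left (by rw [← hr]; exact hne1)
      have heq : f (x, y0) = f (x, y1) := Prod.ext hr (c0.symm.trans c1)
      have := finj heq
      simp only [Prod.mk.injEq, true_and] at this
      exact hy this
    · exfalso
      have hcol : ∀ y : Fin m, (f (x, y)).2 = (f (x, y0)).2 := by
        intro y
        by_cases h0 : y = y0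
        · rw [h0]
        by_cases h1 : y = y1
        · rw [h1, ← hc]
        by_contra hne1
        have a0 := rookGrid_adj.mp (hxy y y0 h0)
        have a1 := rookGrid_adj.mp (hxy y y1 h1)
        have c0 : (f (x, y)).1 = (f (x, y0)).1 := a0.2.resolve_right hne1
        have c1 : (f (x, y)).1 = (f (x, y1)).1 := a1.2.resolve_right (by rw [← hc]; exact hne1)
        have heq : f (x, y0) = f (x, y1) := Prod.ext (c0.symm.trans c1) hc
        have := finj heq
        simp only [Prod.mk.injEq, true_and] at this
        exact hy this
      set c := (f (x, y0)).2 with hcdef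
      have h1 : (f (x, c)).2 = c := hcol c
      have h2 := hopp (x, c)
      exact h2.2 (rookGrid_adj.mpr ⟨Ne.symm h2.1, Or.inr h1.symm⟩)
  set σ : Fin n → Fin n := fun x => (f (x, y0)).1 with hσdef
  have hσne : ∀ x, σ x ≠ x := by
    intro x h
    exact (hopp (x, y0)).2 (rookGrid_adj.mpr ⟨Ne.symm (hopp (x, y0)).1, Or.inl h.symm⟩)
  have hσσ : ∀ x, σ (σ x) = x := by
    intro x
    calc σ (σ x) = (f (σ x, y0)).1 := rfl
      _ = (f (σ x, (f (x, y0)).2)).1 := (hrow (σ x) y0).trans (hrow (σ x) _).symm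
      _ = (f (f (x, y0))).1 := rfl
      _ = x := by rw [hinv]
  exact even_of_inv σ hσσ hσne

theorem rookGrid_opposable_iff (n m : ℕ) (hn0 : 0 < n) (hm0 : 0 < m) :
    (Opposable (rookGrid n m) ↔ Even n ∧ Even m) ∧
      (Even n → Even m →
        IsOpposition (rookGrid n m) (fun p => (p.1.rev, p.2.rev))) := by
  constructor
  · constructor
    · rintro ⟨f, hf⟩
      by_cases hn : 2 ≤ n
      · by_cases hm : 2 ≤ m
        · exact ⟨even_left hm f hf, even_left hn _ (opp_swap f hf)⟩
        · exfalso
          have hm1 : m = 1 := by omega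
          subst hm1
          obtain ⟨hadj, hinv, hopp⟩ := hf
          set v : Fin n × Fin 1 := (⟨0, hn0⟩, 0) with hv
          exact (hopp v).2 (rookGrid_adj.mpr
            ⟨Ne.symm (hopp v).1, Or.inr (Subsingleton.elim _ _)⟩)
      · exfalso
        have hn1 : n = 1 := by omega
        subst hn1
        obtain ⟨hadj, hinv, hopp⟩ := hf
        set v : Fin 1 × Fin m := (0, ⟨0, hm0⟩) with hv
        exact (hopp v).2 (rookGrid_adj.mpr
          ⟨Ne.symm (hopp v).1, Or.inl (Subsingleton.elim _ _)⟩)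
    · rintro ⟨hn, hm⟩
      exact ⟨_, rev_opp hn hm⟩
  · intro hn hm
    exact rev_opp hn hm
end

section
/- If n is odd or m is odd, then the n × m Queen's grid is almost opposable: there is an admissible set S (the middle column when exactly one dimension is odd, or the closed neighbourhood of the centre vertex when both are odd) such that (x,y) ↦ (n−x−1, m−y−1) is an opposition of the Queen's grid minus S. -/
/-- The `n × m` Queen's grid. -/
def queenGrid (n m : ℕ) : SimpleGraph (Fin n × Fin m) :=
  SimpleGraph.fromRel fun p q =>
    p.1 = q.1 ∨ p.2 = q.2 ∨ |(p.1 : ℤ) - (q.1 : ℤ)| = |(p.2 : ℤ) - (q.2 : ℤ)|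

lemma qg_adj_iff (n m : ℕ) (p q : Fin n × Fin m) :
    (queenGrid n m).Adj p q ↔ ¬(p.1.val = q.1.val ∧ p.2.val = q.2.val) ∧
      ((p.1.val : ℤ) = q.1.val ∨ (p.2.val : ℤ) = q.2.val ∨
        (p.1.val : ℤ) - q.1.val = (p.2.val : ℤ) - q.2.val ∨
        (p.1.val : ℤ) - q.1.val = (q.2.val : ℤ) - p.2.val) := by
  simp only [queenGrid, SimpleGraph.fromRel_adj, Prod.ext_iff, Fin.ext_iff, abs_eq_abs, ne_eq]
  omega

lemma rev_val (n : ℕ) (i : Fin n) : (i.rev : ℕ) = n - 1 - i := by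
  simp [Fin.val_rev]; omega

lemma qg_adj_rev (n m : ℕ) (p q : Fin n × Fin m) :
    (queenGrid n m).Adj p q ↔ (queenGrid n m).Adj (p.1.rev, p.2.rev) (q.1.rev, q.2.rev) := by
  have h1 := p.1.isLt; have h2 := p.2.isLt; have h3 := q.1.isLt; have h4 := q.2.isLt
  simp only [qg_adj_iff, rev_val]
  omega

lemma qg_case1 (n m : ℕ) (hno : Odd n) (hme : Even m) :
    IsOppositionOn (queenGrid n m) {p | (p.1 : ℕ) ≠ (n - 1) / 2}
      (fun p => (p.1.rev, p.2.rev)) := by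
  obtain ⟨a, ha⟩ := hno
  obtain ⟨b, hb⟩ := hme
  refine ⟨?_, fun u _ v _ => qg_adj_rev n m u v, fun v _ => by simp, fun v hv => ?_⟩
  · intro v hv
    simp only [Set.mem_setOf_eq, rev_val] at hv ⊢
    have := v.1.isLt
    omega
  · simp only [Set.mem_setOf_eq] at hv
    have h1 := v.1.isLt; have h2 := v.2.isLt
    constructor
    · simp only [ne_eq, Prod.ext_iff, Fin.ext_iff, rev_val]
      omega
    · simp only [qg_adj_iff, rev_val]
      omega

lemma qg_case2 (n m : ℕ) (hne : Even n) (hmo : Odd m) :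
    IsOppositionOn (queenGrid n m) {p | (p.2 : ℕ) ≠ (m - 1) / 2}
      (fun p => (p.1.rev, p.2.rev)) := by
  obtain ⟨a, ha⟩ := hne
  obtain ⟨b, hb⟩ := hmo
  refine ⟨?_, fun u _ v _ => qg_adj_rev n m u v, fun v _ => by simp, fun v hv => ?_⟩
  · intro v hv
    simp only [Set.mem_setOf_eq, rev_val] at hv ⊢
    have := v.2.isLt
    omega
  · simp only [Set.mem_setOf_eq] at hv
    have h1 := v.1.isLt; have h2 := v.2.isLt
    constructor
    · simp only [ne_eq, Prod.ext_iff, Fin.ext_iff, rev_val]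
      omega
    · simp only [qg_adj_iff, rev_val]
      omega

lemma qg_case3 (n m : ℕ) (hno : Odd n) (hmo : Odd m)
    (c : Fin n × Fin m) (hc1 : (c.1 : ℕ) = (n - 1) / 2) (hc2 : (c.2 : ℕ) = (m - 1) / 2) :
    IsOppositionOn (queenGrid n m)
      {p | ¬ (p = c ∨ (queenGrid n m).Adj c p)}
      (fun p => (p.1.rev, p.2.rev)) := by
  obtain ⟨a, ha⟩ := hno
  obtain ⟨b, hb⟩ := hmo
  have ha' : (c.1 : ℕ) = a := by omega
  have hb' : (c.2 : ℕ) = b := by omega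
  refine ⟨?_, fun u _ v _ => qg_adj_rev n m u v, fun v _ => by simp, fun v hv => ?_⟩
  · intro v hv
    simp only [Set.mem_setOf_eq, qg_adj_iff, Prod.ext_iff, Fin.ext_iff, rev_val, ha', hb'] at hv ⊢
    have := v.1.isLt; have := v.2.isLt
    omega
  · simp only [Set.mem_setOf_eq, qg_adj_iff, Prod.ext_iff, Fin.ext_iff, ha', hb'] at hv
    have h1 := v.1.isLt; have h2 := v.2.isLt
    constructor
    · simp only [ne_eq, Prod.ext_iff, Fin.ext_iff, rev_val]
      omega
    · simp only [qg_adj_iff, rev_val]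
      omega

theorem queenGrid_odd_almostOpposable (n m : ℕ) (hn0 : 0 < n) (hm0 : 0 < m) :
    (Odd n → Even m →
      IsOppositionOn (queenGrid n m) {p | (p.1 : ℕ) ≠ (n - 1) / 2}
        (fun p => (p.1.rev, p.2.rev))) ∧
    (Even n → Odd m →
      IsOppositionOn (queenGrid n m) {p | (p.2 : ℕ) ≠ (m - 1) / 2}
        (fun p => (p.1.rev, p.2.rev))) ∧
    (∀ (hno : Odd n) (hmo : Odd m),
      IsOppositionOn (queenGrid n m)
        {p | ¬ (p = (⟨(n - 1) / 2, by obtain ⟨a, ha⟩ := hno; omega⟩,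
                     ⟨(m - 1) / 2, by obtain ⟨a, ha⟩ := hmo; omega⟩) ∨
                (queenGrid n m).Adj
                  (⟨(n - 1) / 2, by obtain ⟨a, ha⟩ := hno; omega⟩,
                   ⟨(m - 1) / 2, by obtain ⟨a, ha⟩ := hmo; omega⟩) p)}
        (fun p => (p.1.rev, p.2.rev))) ∧
    ((Odd n ∨ Odd m) → AlmostOpposable (queenGrid n m)) := by
  refine ⟨fun hno hme => qg_case1 n m hno hme, fun hne hmo => qg_case2 n m hne hmo,
    fun hno hmo => qg_case3 n m hno hmo _ rfl rfl, ?_⟩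
  intro h
  rcases Nat.even_or_odd n with hne | hno
  · -- n even, so m odd
    have hmo : Odd m := h.resolve_left (Nat.not_odd_iff_even.mpr hne)
    obtain ⟨b, hb⟩ := hmo
    refine ⟨(⟨0, hn0⟩, ⟨(m-1)/2, by omega⟩), {p | (p.2 : ℕ) = (m - 1) / 2}, rfl, ?_, ?_⟩
    · intro v hv
      simp only [Set.mem_setOf_eq] at hv
      by_cases hvu : v = (⟨0, hn0⟩, ⟨(m-1)/2, by omega⟩)
      · exact Or.inl hvu
      · refine Or.inr ?_
        rw [qg_adj_iff]
        simp only [Prod.ext_iff, Fin.ext_iff] at hvu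
        simp only []
        omega
    · refine ⟨fun p => (p.1.rev, p.2.rev), ?_⟩
      have : ({p : Fin n × Fin m | (p.2 : ℕ) = (m - 1) / 2})ᶜ
          = {p | (p.2 : ℕ) ≠ (m - 1) / 2} := rfl
      rw [this]
      exact qg_case2 n m hne ⟨b, hb⟩
  · rcases Nat.even_or_odd m with hme | hmo
    · -- n odd, m even
      obtain ⟨a, ha⟩ := hno
      refine ⟨(⟨(n-1)/2, by omega⟩, ⟨0, hm0⟩), {p | (p.1 : ℕ) = (n - 1) / 2}, rfl, ?_, ?_⟩
      · intro v hv
        simp only [Set.mem_setOf_eq] at hv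
        by_cases hvu : v = (⟨(n-1)/2, by omega⟩, ⟨0, hm0⟩)
        · exact Or.inl hvu
        · refine Or.inr ?_
          rw [qg_adj_iff]
          simp only [Prod.ext_iff, Fin.ext_iff] at hvu
          simp only []
          omega
      · refine ⟨fun p => (p.1.rev, p.2.rev), ?_⟩
        have : ({p : Fin n × Fin m | (p.1 : ℕ) = (n - 1) / 2})ᶜ
            = {p | (p.1 : ℕ) ≠ (n - 1) / 2} := rfl
        rw [this]
        exact qg_case1 n m ⟨a, ha⟩ hme
    · -- both odd
      obtain ⟨a, ha⟩ := hno
      obtain ⟨b, hb⟩ := hmo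
      set c : Fin n × Fin m := (⟨(n-1)/2, by omega⟩, ⟨(m-1)/2, by omega⟩) with hc
      refine ⟨c, {p | p = c ∨ (queenGrid n m).Adj c p}, Or.inl rfl, ?_, ?_⟩
      · intro v hv
        simp only [Set.mem_setOf_eq] at hv
        exact hv
      · refine ⟨fun p => (p.1.rev, p.2.rev), ?_⟩
        have : ({p : Fin n × Fin m | p = c ∨ (queenGrid n m).Adj c p})ᶜ
            = {p | ¬ (p = c ∨ (queenGrid n m).Adj c p)} := rfl
        rw [this]
        exact qg_case3 n m ⟨a, ha⟩ ⟨b, hb⟩ c rfl rfl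
end
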